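/- Let γ_k, γ_j : [a,b] → ℝ be C¹ with γ_k' ≥ c̄ > 0, and let τ = (τ_j, τ_k) be C¹ directions. Then the joint pathwise derivative satisfies: lim_{t→0⁺} [(γ_k + tτ_k)⁻¹(γ_j(x) + tτ_j(x)) − γ_k⁻¹(γ_j(x))]/t = [τ_j(x) − τ_k(γ_k⁻¹(γ_j(x)))] / γ_k'(γ_k⁻¹(γ_j(x))). -/

import Mathlib

open Set Filter

theorem stmt_9 (a b cbar t₀ x : ℝ) (γk γk' γj γj' τj τj' τk τk' : ℝ → ℝ)
    (invk : ℝ → ℝ → ℝ)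
    (hcbar : 0 < cbar) (ht₀ : 0 < t₀)
    -- γk is C¹ with derivative bounded below by cbar on [a,b]
    (hγk : ∀ y, HasDerivAt γk (γk' y) y) (hγk'c : Continuous γk')
    (hγk'lb : ∀ y ∈ Icc a b, cbar ≤ γk' y)
    -- γj, τj, τk are C¹, τj and τk bounded
    (hγj : ∀ y, HasDerivAt γj (γj' y) y)
    (hτj : ∀ y, HasDerivAt τj (τj' y) y)
    (hτk : ∀ y, HasDerivAt τk (τk' y) y)
    (hτjbdd : ∃ C, ∀ y, |τj y| ≤ C) (hτkbdd : ∃ C, ∀ y, |τk y| ≤ C)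
    (hx : x ∈ Icc a b)
    -- invk t is the inverse of γk + t•τk, evaluated at γj x + t·τj x
    (hinv_mem : ∀ t ∈ Ico (0:ℝ) t₀, invk t (γj x + t * τj x) ∈ Icc a b)
    (hinv : ∀ t ∈ Ico (0:ℝ) t₀,
      γk (invk t (γj x + t * τj x)) + t * τk (invk t (γj x + t * τj x))
        = γj x + t * τj x)
    -- at t = 0, invk 0 is the inverse of γk at γj x
    (hinv0_mem : invk 0 (γj x) ∈ Icc a b)
    (hinv0 : γk (invk 0 (γj x)) = γj x) :
    Tendsto (fun t => (invk t (γj x + t * τj x) - invk 0 (γj x)) / t)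
      (nhdsWithin 0 (Ioi 0))
      (nhds ((τj x - τk (invk 0 (γj x))) / γk' (invk 0 (γj x)))) := by
  obtain ⟨C, hC⟩ := hτkbdd
  set y0 := invk 0 (γj x) with hy0
  set y : ℝ → ℝ := fun t => invk t (γj x + t * τj x) with hy
  have hC0 : 0 ≤ C := le_trans (abs_nonneg _) (hC 0)
  -- key algebraic identity
  have key : ∀ t ∈ Ioo (0:ℝ) t₀, γk (y t) - γk y0 = t * (τj x - τk (y t)) := by
    intro t ht
    have h1 := hinv t ⟨le_of_lt ht.1, ht.2⟩
    rw [hinv0]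
    simp only [hy]
    ring_nf
    ring_nf at h1
    linarith
  -- strict mono on Icc a b
  have hderiv : ∀ z, deriv γk z = γk' z := fun z => (hγk z).deriv
  have hsm : StrictMonoOn γk (Icc a b) := by
    apply strictMonoOn_of_deriv_pos (convex_Icc a b)
      (fun z _ => (hγk z).continuousAt.continuousWithinAt)
    intro z hz
    rw [hderiv]
    exact lt_of_lt_of_le hcbar (hγk'lb z (interior_subset hz))
  -- cbar lipschitz-type lower bound
  have hlb : ∀ u ∈ Icc a b, ∀ v ∈ Icc a b, cbar * |v - u| ≤ |γk v - γk u| := by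
    have hmono : MonotoneOn (fun z => γk z - cbar * z) (Icc a b) := by
      have hd : ∀ z : ℝ, HasDerivAt (fun z => γk z - cbar * z) (γk' z - cbar * 1) z :=
        fun z => (hγk z).sub ((hasDerivAt_id z).const_mul cbar)
      apply monotoneOn_of_deriv_nonneg (convex_Icc a b)
      · exact fun z _ => (hd z).continuousAt.continuousWithinAt
      · exact fun z _ => (hd z).differentiableAt.differentiableWithinAt
      · intro z hz
        rw [(hd z).deriv]
        have := hγk'lb z (interior_subset hz)
        linarith
    have haux : ∀ u ∈ Icc a b, ∀ v ∈ Icc a b, u ≤ v → cbar * (v - u) ≤ γk v - γk u := by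
      intro u hu v hv huv
      have := hmono hu hv huv
      simp only at this
      linarith
    intro u hu v hv
    rcases le_total u v with h | h
    · rw [abs_of_nonneg (by linarith), abs_of_nonneg (by linarith [haux u hu v hv h, mul_nonneg hcbar.le (sub_nonneg.2 h)])]
      exact haux u hu v hv h
    · rw [abs_of_nonpos (by linarith), abs_of_nonpos (by linarith [haux v hv u hu h, mul_nonneg hcbar.le (sub_nonneg.2 h)])]
      have := haux v hv u hu h
      linarith
  -- y tends to y0
  have hIoo : Ioo (0:ℝ) t₀ ∈ nhdsWithin (0:ℝ) (Ioi 0) := by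
    apply Ioo_mem_nhdsGT_of_mem
    exact ⟨le_refl 0, ht₀⟩
  have hbound : ∀ t ∈ Ioo (0:ℝ) t₀, |y t - y0| ≤ t * ((|τj x| + C) / cbar) := by
    intro t ht
    have hmem := hinv_mem t ⟨le_of_lt ht.1, ht.2⟩
    have h1 := hlb y0 hinv0_mem (y t) hmem
    have h2 : |γk (y t) - γk y0| = t * |τj x - τk (y t)| := by
      rw [key t ht, abs_mul, abs_of_pos ht.1]
    have h3 : |τj x - τk (y t)| ≤ |τj x| + C :=
      le_trans (abs_sub (τj x) (τk (y t))) (by linarith [hC (y t)])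
    rw [h2] at h1
    have h4 : cbar * |y t - y0| ≤ t * (|τj x| + C) :=
      h1.trans (mul_le_mul_of_nonneg_left h3 ht.1.le)
    calc |y t - y0| = cbar * |y t - y0| / cbar := by field_simp
      _ ≤ t * (|τj x| + C) / cbar := by gcongr
      _ = t * ((|τj x| + C) / cbar) := by ring
  have htendy : Tendsto y (nhdsWithin 0 (Ioi 0)) (nhds y0) := by
    rw [tendsto_iff_dist_tendsto_zero]
    have hsq1 : ∀ᶠ t in nhdsWithin (0:ℝ) (Ioi 0), dist (y t) y0 ≤ t * ((|τj x| + C) / cbar) := by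
      filter_upwards [hIoo] with t ht
      rw [Real.dist_eq]
      exact hbound t ht
    have hsq2 : Tendsto (fun t : ℝ => t * ((|τj x| + C) / cbar)) (nhdsWithin 0 (Ioi 0)) (nhds 0) := by
      have h := ((continuous_id.mul (continuous_const : Continuous fun _ : ℝ => (|τj x| + C) / cbar)).tendsto (0:ℝ)).mono_left (nhdsWithin_le_nhds (s := Ioi (0:ℝ)))
      simpa only [Pi.mul_def, id_eq, zero_mul] using h
    exact squeeze_zero' (Eventually.of_forall fun t => dist_nonneg) hsq1 hsq2
  -- γk' y0 ≠ 0
  have hne : γk' y0 ≠ 0 := (lt_of_lt_of_le hcbar (hγk'lb y0 hinv0_mem)).ne'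
  -- the slope-inverse function
  set F : ℝ → ℝ := fun z => if z = y0 then (γk' y0)⁻¹ else (z - y0) / (γk z - γk y0) with hF
  have hFtend : Tendsto F (nhds y0) (nhds ((γk' y0)⁻¹)) := by
    rw [← nhdsNE_sup_pure, tendsto_sup]
    constructor
    · have hslope : Tendsto (slope γk y0) (nhdsWithin y0 {y0}ᶜ) (nhds (γk' y0)) :=
        hasDerivAt_iff_tendsto_slope.mp (hγk y0)
      have : Tendsto (fun z => (slope γk y0 z)⁻¹) (nhdsWithin y0 {y0}ᶜ) (nhds ((γk' y0)⁻¹)) :=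
        (tendsto_inv₀ hne).comp hslope
      apply this.congr'
      filter_upwards [self_mem_nhdsWithin] with z hz
      have hzne : z ≠ y0 := hz
      rw [hF]
      simp only [if_neg hzne, slope_def_field, div_eq_div_iff]
      rw [inv_div]
    · have : F y0 = (γk' y0)⁻¹ := if_pos rfl
      rw [← this]
      exact tendsto_pure_nhds F y0
  -- eventual equality
  have heq : ∀ t ∈ Ioo (0:ℝ) t₀,
      (y t - y0) / t = (τj x - τk (y t)) * F (y t) := by
    intro t ht
    have hk := key t ht
    have htne : t ≠ 0 := ht.1.ne'
    by_cases hz : y t = y0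
    · rw [hz] at hk ⊢
      have : τj x - τk y0 = 0 := by
        have : t * (τj x - τk y0) = 0 := by rw [← hk]; ring
        rcases mul_eq_zero.mp this with h | h
        · exact absurd h htne
        · exact h
      rw [this]
      simp
    · have hmem := hinv_mem t ⟨le_of_lt ht.1, ht.2⟩
      have hkne : γk (y t) - γk y0 ≠ 0 :=
        sub_ne_zero.2 (fun h => hz (hsm.injOn hmem hinv0_mem h))
      have hτne : τj x - τk (y t) ≠ 0 := by
        intro h
        rw [h, mul_zero] at hk
        exact hkne hk
      rw [hF]
      simp only [if_neg hz]
      rw [hk]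
      field_simp
  -- conclude
  have htarget : Tendsto (fun t => (τj x - τk (y t)) * F (y t))
      (nhdsWithin 0 (Ioi 0)) (nhds ((τj x - τk y0) * (γk' y0)⁻¹)) := by
    apply Tendsto.mul
    · exact (tendsto_const_nhds.sub ((hτk (y0)).continuousAt.tendsto.comp htendy))
    · exact hFtend.comp htendy
  rw [div_eq_mul_inv]
  apply htarget.congr'
  filter_upwards [hIoo] with t ht
  exact (heq t ht).symm
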